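/- Let 𝔤 and 𝔥 be Lie algebras with a left action ▷ : 𝔥 × 𝔤 → 𝔤 and a right action ◁ : 𝔥 × 𝔤 → 𝔥 satisfying the matched pair compatibility conditions: η ▷ [ξ, ξ'] = [η ▷ ξ, ξ'] + [ξ, η ▷ ξ'] + (η ◁ ξ) ▷ ξ' − (η ◁ ξ') ▷ ξ and [η, η'] ◁ ξ = [η, η' ◁ ξ] + [η ◁ ξ, η'] + η ◁ (η' ▷ ξ) − η' ◁ (η ▷ ξ). Then the bracket on the direct sum 𝔤 ⊕ 𝔥 defined by [(ξ, η), (ξ', η')] = ([ξ, ξ'] + η ▷ ξ' − η' ▷ ξ, [η, η'] + η ◁ ξ' − η' ◁ ξ) satisfies the Jacobi identity and makes 𝔤 ⊕ 𝔥 a Lie algebra (the double cross sum 𝔤 ⋈ 𝔥). -/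
import Mathlib


/-- **Matched pair / double cross sum of Lie algebras.**
Given Lie algebras `g` and `h` over a field `k`, a left Lie algebra action
`tr : h → g → g` and a right Lie algebra action `tl : h → g → h` (both bilinear)
satisfying the matched pair compatibility conditions, the bracket on `g ⊕ h`
defined by `[(ξ,η),(ξ',η')] = ([ξ,ξ'] + η▷ξ' − η'▷ξ, [η,η'] + η◁ξ' − η'◁ξ)`
is alternating, antisymmetric, bilinear, and satisfies the Jacobi identity;
hence it makes `g ⊕ h` into a Lie algebra (the double cross sum `g ⋈ h`). -/
theorem double_cross_sum_is_lie_algebra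
    (k : Type*) [Field k] (g h : Type*)
    [LieRing g] [LieAlgebra k g] [LieRing h] [LieAlgebra k h]
    (tr : h →ₗ[k] g →ₗ[k] g) (tl : h →ₗ[k] g →ₗ[k] h)
    -- `tr` is a left Lie algebra action of `h` on `g`
    (htr : ∀ (η η' : h) (ξ : g), tr ⁅η, η'⁆ ξ = tr η (tr η' ξ) - tr η' (tr η ξ))
    -- `tl` is a right Lie algebra action of `g` on `h`
    (htl : ∀ (η : h) (ξ ξ' : g), tl η ⁅ξ, ξ'⁆ = tl (tl η ξ) ξ' - tl (tl η ξ') ξ)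
    -- matched pair compatibility conditions
    (hcomp1 : ∀ (η : h) (ξ ξ' : g),
      tr η ⁅ξ, ξ'⁆ = ⁅tr η ξ, ξ'⁆ + ⁅ξ, tr η ξ'⁆ + tr (tl η ξ) ξ' - tr (tl η ξ') ξ)
    (hcomp2 : ∀ (η η' : h) (ξ : g),
      tl ⁅η, η'⁆ ξ = ⁅η, tl η' ξ⁆ + ⁅tl η ξ, η'⁆ + tl η (tr η' ξ) - tl η' (tr η ξ))
    -- the double cross sum bracket on `g ⊕ h`
    (b : (g × h) → (g × h) → (g × h))
    (hb : ∀ x y : g × h, b x y =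
      (⁅x.1, y.1⁆ + tr x.2 y.1 - tr y.2 x.1, ⁅x.2, y.2⁆ + tl x.2 y.1 - tl y.2 x.1)) :
    -- `b` is alternating
    (∀ x : g × h, b x x = 0) ∧
    -- `b` is antisymmetric
    (∀ x y : g × h, b x y = - b y x) ∧
    -- `b` satisfies the Jacobi identity
    (∀ x y z : g × h, b x (b y z) + b y (b z x) + b z (b x y) = 0) ∧
    -- `b` is bilinear
    (∀ x y z : g × h, b (x + y) z = b x z + b y z) ∧
    (∀ x y z : g × h, b x (y + z) = b x y + b x z) ∧
    (∀ (c : k) (x y : g × h), b (c • x) y = c • b x y) ∧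
    (∀ (c : k) (x y : g × h), b x (c • y) = c • b x y) := by
  refine ⟨?_, ?_, ?_, ?_, ?_, ?_, ?_⟩
  · intro x
    simp [hb, Prod.ext_iff]
  · intro x y
    simp only [hb, Prod.neg_mk, Prod.mk.injEq]
    constructor
    · rw [(lie_skew x.1 y.1).symm]; abel
    · rw [(lie_skew x.2 y.2).symm]; abel
  · intro x y z
    obtain ⟨x1, x2⟩ := x; obtain ⟨y1, y2⟩ := y; obtain ⟨z1, z2⟩ := z
    simp only [hb, Prod.mk_add_mk, Prod.mk.injEq, Prod.ext_iff, Prod.fst, Prod.snd,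
      lie_add, lie_sub, add_lie, sub_lie, map_add, map_sub, LinearMap.add_apply,
      LinearMap.sub_apply, htr, htl, hcomp1, hcomp2, Prod.fst_add, Prod.snd_add,
      Prod.fst_zero, Prod.snd_zero]
    constructor
    · rw [(lie_skew ((tr x2) y1) z1).symm, (lie_skew ((tr y2) z1) x1).symm,
        (lie_skew ((tr z2) x1) y1).symm, ← lie_jacobi x1 y1 z1]
      abel
    · rw [(lie_skew ((tl y2) x1) z2).symm, (lie_skew ((tl z2) y1) x2).symm,
        (lie_skew ((tl x2) z1) y2).symm, ← lie_jacobi x2 y2 z2]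
      abel
  · intro x y z
    simp only [hb, Prod.fst_add, Prod.snd_add, add_lie, map_add, LinearMap.add_apply,
      Prod.mk_add_mk, Prod.mk.injEq]
    constructor <;> abel
  · intro x y z
    simp only [hb, Prod.fst_add, Prod.snd_add, lie_add, map_add, LinearMap.add_apply,
      Prod.mk_add_mk, Prod.mk.injEq]
    constructor <;> abel
  · intro c x y
    simp only [hb, Prod.smul_fst, Prod.smul_snd, smul_lie, map_smul, LinearMap.smul_apply,
      Prod.smul_mk, Prod.mk.injEq, smul_add, smul_sub]
  · intro c x y
    simp only [hb, Prod.smul_fst, Prod.smul_snd, lie_smul, map_smul, LinearMap.smul_apply,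
      Prod.smul_mk, Prod.mk.injEq, smul_add, smul_sub]
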